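/- arXiv:1705.06244 — 2 statements merged into one kernel-verified Lean document; each statement's English description precedes it below -/
import Mathlib

section
/- For every proper embedding 𝒯 ∈ Λ_N, the boxes B(𝒯(m), 2L), for distinct leaves m ∈ T_(N), are pairwise disjoint. -/
/-!
STATEMENT 3: For every proper embedding `𝒯 ∈ Λ_N`, the boxes `B(𝒯(m), 2L)` for
distinct leaves `m ∈ T_(N)` are pairwise disjoint.

`B(x,r)` is the `ℓ∞`-ball of radius `r` around `x` in `ℤ^d`. Tree nodes are lists of
booleans, the leaves of `T_N` being the lists of length `N`.
-/

/-- The `ℓ∞` norm of a point of `ℤ^d`, as a natural number. -/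
def normInf {d : ℕ} (x : Fin d → ℤ) : ℕ := Finset.univ.sup fun i => (x i).natAbs

/-- The `ℓ∞`-ball `B(x, r)` in `ℤ^d`. -/
def box {d : ℕ} (x : Fin d → ℤ) (r : ℕ) : Set (Fin d → ℤ) := {y | normInf (y - x) ≤ r}

/-- Proper embedding of the binary tree `T_N` of height `N` (scale parameter `L`). -/
def IsProperEmbedding (d L N : ℕ) (T : List Bool → (Fin d → ℤ)) : Prop :=
  T [] = 0 ∧
  (∀ m : List Bool, m.length ≤ N → ∀ i : Fin d,
      ((6 ^ (N - m.length) * L : ℕ) : ℤ) ∣ T m i) ∧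
  ∀ m : List Bool, m.length < N →
    normInf (T (m ++ [false]) - T m) = 6 ^ (N - m.length) * L ∧
    normInf (T (m ++ [true]) - T m) = 2 * (6 ^ (N - m.length) * L)

lemma normInf_add_le {d : ℕ} (x y : Fin d → ℤ) :
    normInf (x + y) ≤ normInf x + normInf y := by
  apply Finset.sup_le
  intro i _
  calc ((x + y) i).natAbs = (x i + y i).natAbs := rfl
    _ ≤ (x i).natAbs + (y i).natAbs := Int.natAbs_add_le _ _
    _ ≤ normInf x + normInf y :=
        add_le_add (Finset.le_sup (f := fun j => (x j).natAbs) (Finset.mem_univ i))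
          (Finset.le_sup (f := fun j => (y j).natAbs) (Finset.mem_univ i))

lemma normInf_sub_tri {d : ℕ} (a b c : Fin d → ℤ) :
    normInf (a - c) ≤ normInf (a - b) + normInf (b - c) := by
  have h : a - c = (a - b) + (b - c) := by ring
  rw [h]; exact normInf_add_le _ _

lemma normInf_sub_comm {d : ℕ} (x y : Fin d → ℤ) :
    normInf (x - y) = normInf (y - x) := by
  unfold normInf
  apply Finset.sup_congr rfl
  intro i _
  rw [Pi.sub_apply, Pi.sub_apply, ← Int.natAbs_neg, neg_sub]

lemma tail_bound {d L N : ℕ} {T : List Bool → (Fin d → ℤ)}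
    (hT : IsProperEmbedding d L N T) :
    ∀ (s m : List Bool), m.length + s.length ≤ N →
      5 * normInf (T (m ++ s) - T m) + 12 * 6 ^ (N - m.length - s.length) * L
        ≤ 12 * 6 ^ (N - m.length) * L := by
  intro s
  induction s with
  | nil =>
      intro m h
      simp [normInf]
  | cons b s' ih =>
      intro m h
      have hlen : (m ++ [b]).length = m.length + 1 := by simp
      have hlt : m.length < N := by
        simp only [List.length_cons] at h; omega
      have h1 : (m ++ [b]).length + s'.length ≤ N := by
        simp only [List.length_cons] at h; rw [hlen]; omega
      have ih' := ih (m ++ [b]) h1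
      rw [hlen] at ih'
      have hstep : normInf (T (m ++ [b]) - T m) ≤ 2 * (6 ^ (N - m.length) * L) := by
        have hc := (hT.2.2 m hlt)
        cases b
        · rw [hc.1]; omega
        · rw [hc.2]
      have htri : normInf (T (m ++ b :: s') - T m)
          ≤ normInf (T ((m ++ [b]) ++ s') - T (m ++ [b])) + normInf (T (m ++ [b]) - T m) := by
        have hms : m ++ b :: s' = (m ++ [b]) ++ s' := by simp
        rw [hms]; exact normInf_sub_tri _ _ _
      have hexp : N - m.length = (N - (m.length + 1)) + 1 := by omega
      have hexp2 : N - m.length - (b :: s').length = N - (m.length + 1) - s'.length := by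
        simp only [List.length_cons]; omega
      rw [hexp, pow_succ] at hstep
      rw [hexp2, hexp, pow_succ]
      set A := 6 ^ (N - (m.length + 1)) with hA
      linarith [htri, ih', hstep]

lemma diverge : ∀ (m m' : List Bool), m.length = m'.length → m ≠ m' →
    ∃ p b s s', m = p ++ b :: s ∧ m' = p ++ (!b) :: s' ∧ s.length = s'.length := by
  intro m
  induction m with
  | nil =>
      intro m' h hne
      cases m' with
      | nil => exact absurd rfl hne
      | cons a' m'' => simp at h
  | cons a m ih =>
      intro m' h hne
      cases m' with
      | nil => simp at h
      | cons a' m'' =>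
        by_cases hab : a = a'
        · subst hab
          have hne' : m ≠ m'' := by intro e; exact hne (by rw [e])
          obtain ⟨p, b, s, s', h1, h2, h3⟩ := ih m'' (by simpa using h) hne'
          exact ⟨a :: p, b, s, s', by simp [h1], by simp [h2], h3⟩
        · refine ⟨[], a, m, m'', by simp, ?_, by simpa using h⟩
          have : a' = !a := by cases a <;> cases a' <;> simp_all
          simp [this]

theorem leaf_boxes_pairwise_disjoint (d L N : ℕ) (hd : 1 ≤ d) (hL : 1 ≤ L)
    (T : List Bool → (Fin d → ℤ)) (hT : IsProperEmbedding d L N T) :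
    ∀ m m' : List Bool, m.length = N → m'.length = N → m ≠ m' →
      Disjoint (box (T m) (2 * L)) (box (T m') (2 * L)) := by
  intro m m' hm hm' hne
  obtain ⟨p, b, s, s', h1, h2, hss⟩ := diverge m m' (hm.trans hm'.symm) hne
  set k := p.length with hk
  have hkN : k + 1 + s.length = N := by
    rw [← hm, h1]; simp [hk]; omega
  have hklt : k < N := by omega
  -- middle bound
  have hc := hT.2.2 p hklt
  set A := 6 ^ (N - k) * L with hA
  have hmid : A ≤ normInf (T (p ++ [true]) - T (p ++ [false])) := by
    have h3 := normInf_sub_tri (T (p ++ [true])) (T (p ++ [false])) (T p)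
    rw [hc.1, hc.2] at h3
    omega
  -- sort by b
  have hmid' : A ≤ normInf (T (p ++ [b]) - T (p ++ [!b])) := by
    cases b
    · simpa [normInf_sub_comm (T (p ++ [false]))] using hmid
    · simpa using hmid
  -- tail bounds
  have hexp1 : N - (k + 1) - s.length = 0 := by omega
  have ht1 : 5 * normInf (T m - T (p ++ [b])) + 12 * L ≤ 12 * 6 ^ (N - (k + 1)) * L := by
    have := tail_bound hT s (p ++ [b]) (by simp [hk]; omega)
    have hm1 : (p ++ [b]) ++ s = m := by rw [h1]; simp
    rw [hm1] at this
    rw [List.length_append, List.length_singleton, ← hk, hexp1] at this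
    simpa using this
  have hexp2 : N - (k + 1) - s'.length = 0 := by omega
  have ht2 : 5 * normInf (T m' - T (p ++ [!b])) + 12 * L ≤ 12 * 6 ^ (N - (k + 1)) * L := by
    have := tail_bound hT s' (p ++ [!b]) (by simp [hk]; omega)
    have hm2 : (p ++ [!b]) ++ s' = m' := by rw [h2]; simp
    rw [hm2] at this
    rw [List.length_append, List.length_singleton, ← hk, hexp2] at this
    simpa using this
  -- chain
  have hchain : normInf (T (p ++ [b]) - T (p ++ [!b]))
      ≤ normInf (T (p ++ [b]) - T m) + normInf (T m - T m')
        + normInf (T m' - T (p ++ [!b])) := by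
    calc normInf (T (p ++ [b]) - T (p ++ [!b]))
        ≤ normInf (T (p ++ [b]) - T m') + normInf (T m' - T (p ++ [!b])) :=
          normInf_sub_tri _ _ _
      _ ≤ normInf (T (p ++ [b]) - T m) + normInf (T m - T m')
            + normInf (T m' - T (p ++ [!b])) := by
          have := normInf_sub_tri (T (p ++ [b])) (T m) (T m')
          omega
  have hD : 6 * L ≤ normInf (T m - T m') := by
    have hAe : A = 6 * 6 ^ (N - (k + 1)) * L := by
      rw [hA]
      have : N - k = (N - (k + 1)) + 1 := by omega
      rw [this, pow_succ]; ring
    have hswap : normInf (T (p ++ [b]) - T m) = normInf (T m - T (p ++ [b])) :=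
      normInf_sub_comm _ _
    have hpow : 1 ≤ 6 ^ (N - (k + 1)) := Nat.one_le_pow _ _ (by norm_num)
    nlinarith [hmid', hchain, ht1, ht2]
  -- disjointness
  rw [Set.disjoint_left]
  intro y hy hy'
  have hy1 : normInf (y - T m) ≤ 2 * L := hy
  have hy2 : normInf (y - T m') ≤ 2 * L := hy'
  have : normInf (T m - T m') ≤ normInf (T m - y) + normInf (y - T m') :=
    normInf_sub_tri _ _ _
  rw [normInf_sub_comm (T m) y] at this
  omega
end

section
/- Let d ≥ 3. There exists a constant C'' > 0, depending only on d and L, such that for every N ≥ 0, every proper embedding 𝒯 ∈ Λ_N, and every u ∈ A = ∪_{m ∈ T_(N)} B(𝒯(m), 2L), one has Σ_{v ∈ A, v ≠ u} |u − v|^{2−d} ≤ C''. -/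
/-- The union `A = ∪_{m ∈ T_(N)} B(𝒯(m), 2L)` over the leaves of `T_N`. -/
def leafBoxes (d L N : ℕ) (T : List Bool → (Fin d → ℤ)) : Set (Fin d → ℤ) :=
  ⋃ m ∈ {m : List Bool | m.length = N}, box (T m) (2 * L)

section NormInf

lemma normInf_le_iff {d : ℕ} {x : Fin d → ℤ} {r : ℕ} :
    normInf x ≤ r ↔ ∀ i, (x i).natAbs ≤ r := by
  simp [normInf, Finset.sup_le_iff]

lemma le_normInf {d : ℕ} (x : Fin d → ℤ) (i : Fin d) : (x i).natAbs ≤ normInf x :=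
  Finset.le_sup (f := fun i => (x i).natAbs) (Finset.mem_univ i)

lemma normInf_eq_zero {d : ℕ} {x : Fin d → ℤ} : normInf x = 0 ↔ x = 0 := by
  constructor
  · intro h
    funext i
    have h1 := le_normInf x i
    have h2 : (x i).natAbs = 0 := by omega
    simpa [Int.natAbs_eq_zero] using h2
  · rintro rfl; simp [normInf]

lemma normInf_tri {d : ℕ} (x y z : Fin d → ℤ) :
    normInf (x - z) ≤ normInf (x - y) + normInf (y - z) := by
  have h : x - z = (x - y) + (y - z) := by ring
  rw [h]; exact normInf_add_le _ _

lemma normInf_tri4 {d : ℕ} (x y z w : Fin d → ℤ) :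
    normInf (x - w) ≤ normInf (x - y) + normInf (y - z) + normInf (z - w) := by
  have h := normInf_tri x y w
  have h2 := normInf_tri y z w
  omega

end NormInf

section Geometry

variable {d L N : ℕ} {T : List Bool → (Fin d → ℤ)}

lemma pow6_succ {L N k : ℕ} (hk : k < N) :
    6 ^ (N - k) * L = 6 * (6 ^ (N - (k + 1)) * L) := by
  have h : N - k = (N - (k + 1)) + 1 := by omega
  rw [h, pow_succ]; ring

lemma step_le (hT : IsProperEmbedding d L N T) {m : List Bool} (hm : m.length < N) (b : Bool) :
    normInf (T (m ++ [b]) - T m) ≤ 2 * (6 ^ (N - m.length) * L) := by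
  obtain ⟨hf, ht⟩ := hT.2.2 m hm
  cases b
  · rw [hf]; omega
  · rw [ht]

lemma drift (hT : IsProperEmbedding d L N T) :
    ∀ (t m : List Bool), m.length + t.length ≤ N →
      5 * normInf (T (m ++ t) - T m) ≤ 12 * (6 ^ (N - m.length) * L) := by
  intro t
  induction t with
  | nil => intro m hm; simp [show normInf (0 : Fin d → ℤ) = 0 by simp [normInf]]
  | cons b t ih =>
    intro m hm
    simp only [List.length_cons] at hm
    have hmN : m.length < N := by omega
    have h1 : m ++ b :: t = (m ++ [b]) ++ t := by simp
    have h2 := ih (m ++ [b]) (by simp; omega)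
    have h3 := step_le hT hmN b
    have htri := normInf_tri (T ((m ++ [b]) ++ t)) (T (m ++ [b])) (T m)
    simp only [List.length_append, List.length_singleton] at h2
    rw [pow6_succ hmN] at h3 ⊢
    rw [h1]
    omega

lemma sep_ft (hT : IsProperEmbedding d L N T) {m t₁ t₂ : List Bool}
    (h1 : m.length + t₁.length + 1 ≤ N) (h2 : m.length + t₂.length + 1 ≤ N) :
    6 ^ (N - m.length) * L ≤ 5 * normInf (T (m ++ false :: t₁) - T (m ++ true :: t₂)) := by
  have hmN : m.length < N := by omega
  obtain ⟨hf, ht⟩ := hT.2.2 m hmN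
  rw [show m ++ false :: t₁ = (m ++ [false]) ++ t₁ by simp,
      show m ++ true :: t₂ = (m ++ [true]) ++ t₂ by simp]
  have hchild := normInf_tri (T (m ++ [true])) (T (m ++ [false])) (T m)
  have hx := drift hT t₁ (m ++ [false]) (by simp; omega)
  have hy := drift hT t₂ (m ++ [true]) (by simp; omega)
  simp only [List.length_append, List.length_singleton] at hx hy
  have htri := normInf_tri4 (T (m ++ [true])) (T ((m ++ [true]) ++ t₂))
      (T ((m ++ [false]) ++ t₁)) (T (m ++ [false]))
  have hc1 := normInf_sub_comm (T (m ++ [true])) (T ((m ++ [true]) ++ t₂))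
  have hc2 := normInf_sub_comm (T ((m ++ [true]) ++ t₂)) (T ((m ++ [false]) ++ t₁))
  rw [pow6_succ hmN] at hf ht ⊢
  omega

lemma sep (hT : IsProperEmbedding d L N T) {m t₁ t₂ : List Bool} {b₁ b₂ : Bool}
    (hb : b₁ ≠ b₂)
    (h1 : m.length + t₁.length + 1 ≤ N) (h2 : m.length + t₂.length + 1 ≤ N) :
    6 ^ (N - m.length) * L ≤ 5 * normInf (T (m ++ b₁ :: t₁) - T (m ++ b₂ :: t₂)) := by
  cases b₁ <;> cases b₂ <;> simp_all
  · exact sep_ft hT h1 h2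
  · rw [normInf_sub_comm]; exact sep_ft hT h2 h1

end Geometry

section SplitIdx

def splitIdx : List Bool → List Bool → ℕ
  | a :: l, b :: l' => if a = b then splitIdx l l' + 1 else 0
  | _, _ => 0

lemma splitIdx_le (l l' : List Bool) : splitIdx l l' ≤ l.length := by
  induction l generalizing l' with
  | nil => simp [splitIdx]
  | cons a l ih =>
    cases l' with
    | nil => simp [splitIdx]
    | cons b l' =>
      simp only [splitIdx, List.length_cons]
      split
      · have := ih l'; omega
      · omega

lemma splitIdx_self (l : List Bool) : splitIdx l l = l.length := by
  induction l with
  | nil => simp [splitIdx]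
  | cons a l ih => simp [splitIdx, ih]

lemma splitIdx_decomp {l l' : List Bool} (hlen : l.length = l'.length) (hne : l ≠ l') :
    ∃ p b b' t t', b ≠ b' ∧ l = p ++ b :: t ∧ l' = p ++ b' :: t' ∧
      p.length = splitIdx l l' := by
  induction l generalizing l' with
  | nil =>
    cases l' with
    | nil => exact absurd rfl hne
    | cons b l' => simp at hlen
  | cons a l ih =>
    cases l' with
    | nil => simp at hlen
    | cons b l' =>
      by_cases hab : a = b
      · subst hab
        have hne' : l ≠ l' := by rintro rfl; exact hne rfl
        obtain ⟨p, c, c', t, t', hcc, h1, h2, h3⟩ := ih (by simpa using hlen) hne'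
        exact ⟨a :: p, c, c', t, t', hcc, by simp [h1], by simp [h2],
          by simp [splitIdx, h3]⟩
      · exact ⟨[], a, b, l, l', hab, rfl, rfl, by simp [splitIdx, hab]⟩

lemma splitIdx_take {l l' : List Bool} :
    ∀ i < splitIdx l l', ∀ (h : i < l.length) (h' : i < l'.length), l[i] = l'[i] := by
  induction l generalizing l' with
  | nil => simp [splitIdx]
  | cons a l ih =>
    cases l' with
    | nil => simp [splitIdx]
    | cons b l' =>
      intro i hi h h'
      simp only [splitIdx] at hi
      by_cases hab : a = b
      · simp only [hab, if_true] at hi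
        cases i with
        | zero => simpa using hab
        | succ i => simpa using ih i (by omega) (by simpa using h) (by simpa using h')
      · simp [hab] at hi

end SplitIdx

section Real

lemma term_anti {d : ℕ} (hd : 3 ≤ d) {a b : ℝ} (ha : 1 ≤ a) (hab : a ≤ b) :
    b ^ ((2:ℤ) - (d:ℤ)) ≤ a ^ ((2:ℤ) - (d:ℤ)) := by
  have he : (2:ℤ) - (d:ℤ) = -((d - 2 : ℕ) : ℤ) := by
    push_cast [Nat.cast_sub (by omega : 2 ≤ d)]
    ring
  rw [he, zpow_neg, zpow_natCast, zpow_neg, zpow_natCast]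
  have h1 : (0:ℝ) < a ^ (d - 2) := by positivity
  exact inv_anti₀ h1 (pow_le_pow_left₀ (by linarith) hab _)

lemma gsum_le (n : ℕ) : ∑ j ∈ Finset.range n, (1/3:ℝ)^j ≤ 3/2 := by
  rw [geom_sum_eq (by norm_num : (1/3:ℝ) ≠ 1)]
  have h1 : (0:ℝ) ≤ (1/3:ℝ)^n := by positivity
  have h2 : ((1/3:ℝ))^n ≤ 1 := pow_le_one₀ (by norm_num) (by norm_num)
  rw [div_le_iff_of_neg (by norm_num : (1/3:ℝ) - 1 < 0)]
  linarith

lemma sum_biUnion_le' {ι α : Type*} [DecidableEq ι] [DecidableEq α] (s : Finset ι)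
    (t : ι → Finset α) (f : α → ℝ) (hf : ∀ x, 0 ≤ f x) :
    ∑ x ∈ s.biUnion t, f x ≤ ∑ i ∈ s, ∑ x ∈ t i, f x := by
  induction s using Finset.induction_on with
  | empty => simp
  | insert a s hx ih =>
    rw [Finset.biUnion_insert, Finset.sum_insert hx]
    calc ∑ x ∈ t a ∪ s.biUnion t, f x
        ≤ ∑ x ∈ t a, f x + ∑ x ∈ s.biUnion t, f x := by
          have h1 := Finset.sum_union_inter (s₁ := t a) (s₂ := s.biUnion t) (f := f)
          have h2 : 0 ≤ ∑ x ∈ t a ∩ s.biUnion t, f x := Finset.sum_nonneg fun x _ => hf x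
          linarith
      _ ≤ _ := by linarith [ih]

end Real

theorem sum_inv_dist_pow_le (d : ℕ) (hd : 3 ≤ d) (L : ℕ) (hL : 1 ≤ L) :
    ∃ C : ℝ, 0 < C ∧
      ∀ (N : ℕ) (T : List Bool → (Fin d → ℤ)), IsProperEmbedding d L N T →
        ∀ u ∈ leafBoxes d L N T,
          (∑ᶠ v ∈ {v : Fin d → ℤ | v ∈ leafBoxes d L N T ∧ v ≠ u},
            (normInf (u - v) : ℝ) ^ ((2 : ℤ) - (d : ℤ))) ≤ C := by
  classical
  refine ⟨54 * (4*(L:ℝ)+1)^d, by positivity, ?_⟩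
  intro N T hT u hu
  obtain ⟨m₀, hm₀len, hum₀⟩ : ∃ m : List Bool, m.length = N ∧ u ∈ box (T m) (2*L) := by
    simpa [leafBoxes] using hu
  set g : (Fin d → ℤ) → ℝ := fun v => ((normInf (u - v) : ℝ)) ^ ((2:ℤ) - (d:ℤ)) with hg
  have hg0 : ∀ v, 0 ≤ g v := fun v => zpow_nonneg (by positivity) _
  -- the box as a Finset.Icc
  set c : Fin d → ℤ := fun _ => ((2*L : ℕ) : ℤ) with hc
  have hbox : ∀ (x v : Fin d → ℤ), v ∈ box x (2*L) ↔ v ∈ Finset.Icc (x - c) (x + c) := by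
    intro x v
    simp only [box, Set.mem_setOf_eq, Finset.mem_Icc, Pi.le_def, normInf_le_iff,
      Pi.sub_apply, Pi.add_apply, hc]
    constructor
    · intro h
      refine ⟨fun i => ?_, fun i => ?_⟩ <;> (have := h i; omega)
    · rintro ⟨h1, h2⟩ i
      have := h1 i; have := h2 i; omega
  -- leaf boxes as Finsets indexed by functions
  set Bf : (Fin N → Bool) → Finset (Fin d → ℤ) :=
    fun f => Finset.Icc (T (List.ofFn f) - c) (T (List.ofFn f) + c) with hBf
  set F : Finset (Fin d → ℤ) := Finset.univ.biUnion (fun f => (Bf f).erase u) with hF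
  have hsub : {v : Fin d → ℤ | v ∈ leafBoxes d L N T ∧ v ≠ u} ⊆ ↑F := by
    rintro v ⟨hv, hvu⟩
    obtain ⟨m, hmlen, hvm⟩ : ∃ m : List Bool, m.length = N ∧ v ∈ box (T m) (2*L) := by
      simpa [leafBoxes] using hv
    have hm : List.ofFn (fun i : Fin N => m[(i:ℕ)]'(by omega)) = m := by
      apply List.ext_getElem <;> simp [hmlen]
    refine Finset.mem_coe.2 (Finset.mem_biUnion.2
      ⟨fun i : Fin N => m[(i:ℕ)]'(by omega), Finset.mem_univ _,
        Finset.mem_erase.2 ⟨hvu, ?_⟩⟩)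
    show v ∈ Finset.Icc _ _
    rw [hm]
    exact (hbox _ _).1 hvm
  have hS : {v : Fin d → ℤ | v ∈ leafBoxes d L N T ∧ v ≠ u}.Finite :=
    Set.Finite.subset F.finite_toSet hsub
  -- split scale index
  set K : (Fin N → Bool) → ℕ := fun f => splitIdx (List.ofFn f) m₀ with hK
  have hKle : ∀ f, K f ≤ N := fun f => by
    have := splitIdx_le (List.ofFn f) m₀; simpa using this
  set w : ℕ → ℝ := fun k => if k + 2 ≤ N then ((6:ℝ)^(N - k - 2))^((2:ℤ) - (d:ℤ)) else 1
    with hw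
  have hw0 : ∀ k, 0 ≤ w k := by
    intro k; rw [hw]; dsimp only; split
    · exact zpow_nonneg (by positivity) _
    · norm_num
  -- per-element bound
  have hterm : ∀ (f : Fin N → Bool), ∀ v ∈ (Bf f).erase u, g v ≤ w (K f) := by
    intro f v hv
    obtain ⟨hvu, hvB⟩ := Finset.mem_erase.1 hv
    have h1le : 1 ≤ normInf (u - v) := by
      rcases Nat.eq_zero_or_pos (normInf (u - v)) with h | h
      · exact absurd (by have := normInf_eq_zero.1 h; rwa [sub_eq_zero, eq_comm] at this) hvu
      · omega
    by_cases hkN : K f + 2 ≤ N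
    · -- separated case
      have hne : List.ofFn f ≠ m₀ := by
        intro h
        have h2 : splitIdx (List.ofFn f) m₀ = N := by
          rw [h, splitIdx_self, hm₀len]
        have h3 : K f = splitIdx (List.ofFn f) m₀ := rfl
        omega
      obtain ⟨p, b, b', t, t', hbb, hdec1, hdec2, hplen⟩ :=
        splitIdx_decomp (by simp [hm₀len]) hne
      have hlen1 : p.length + t.length + 1 ≤ N := by
        have : (List.ofFn f).length = N := by simp
        rw [hdec1] at this; simp at this; omega
      have hlen2 : p.length + t'.length + 1 ≤ N := by
        have : m₀.length = N := hm₀len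
        rw [hdec2] at this; simp at this; omega
      have hsep := sep hT hbb hlen1 hlen2
      rw [← hdec1, ← hdec2] at hsep
      -- chain through u and v
      have htri := normInf_tri4 (T (List.ofFn f)) v u (T m₀)
      have hvbox : normInf (v - T (List.ofFn f)) ≤ 2 * L := (hbox _ v).2 hvB
      have hubox : normInf (u - T m₀) ≤ 2 * L := hum₀
      have hc1 := normInf_sub_comm (T (List.ofFn f)) v
      have hc2 := normInf_sub_comm v u
      have hc3 := normInf_sub_comm u (T m₀)
      -- 6^(N - K f) = 36 * 6^(N - K f - 2)
      have hKf : p.length = K f := by rw [hK, hplen]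
      have hpow : 6 ^ (N - p.length) * L = 36 * (6 ^ (N - K f - 2) * L) := by
        rw [hKf]
        have h : N - K f = (N - K f - 2) + 2 := by omega
        calc 6 ^ (N - K f) * L = 6 ^ ((N - K f - 2) + 2) * L := by rw [← h]
          _ = 36 * (6 ^ (N - K f - 2) * L) := by rw [pow_add]; ring
      rw [hpow] at hsep
      have hLB : L ≤ 6 ^ (N - K f - 2) * L := Nat.le_mul_of_pos_left L (by positivity)
      have hnf : 6 ^ (N - K f - 2) * L ≤ normInf (u - v) := by omega
      have hnf' : 6 ^ (N - K f - 2) ≤ normInf (u - v) := le_trans (by nlinarith) hnf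
      rw [hw]
      simp only [if_pos hkN]
      calc g v ≤ (((6:ℕ) ^ (N - K f - 2) : ℕ) : ℝ) ^ ((2:ℤ) - (d:ℤ)) := by
            apply term_anti hd
            · exact_mod_cast Nat.one_le_iff_ne_zero.2 (by positivity)
            · exact_mod_cast hnf'
        _ = ((6:ℝ) ^ (N - K f - 2)) ^ ((2:ℤ) - (d:ℤ)) := by push_cast; ring_nf
    · -- near case: bound by 1
      rw [hw]
      simp only [if_neg hkN]
      calc g v ≤ ((1:ℝ)) ^ ((2:ℤ) - (d:ℤ)) := by
            apply term_anti hd le_rfl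
            exact_mod_cast h1le
        _ = 1 := one_zpow _
  -- per-box bound
  have hcard : ∀ f : Fin N → Bool, (((Bf f).erase u).card : ℝ) ≤ (4*(L:ℝ)+1)^d := by
    intro f
    have h1 : ((Bf f).erase u).card ≤ (Bf f).card := Finset.card_erase_le
    have h2 : (Bf f).card = (4*L+1)^d := by
      rw [hBf]
      dsimp only
      rw [Pi.card_Icc]
      have : ∀ i : Fin d, (Finset.Icc ((T (List.ofFn f) - c) i) ((T (List.ofFn f) + c) i)).card
          = 4*L+1 := by
        intro i
        rw [Int.card_Icc]
        simp only [Pi.sub_apply, Pi.add_apply, hc]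
        omega
      simp only [this, Finset.prod_const, Finset.card_univ, Fintype.card_fin]
    have : (((Bf f).erase u).card : ℝ) ≤ (((4*L+1)^d : ℕ) : ℝ) := by
      exact_mod_cast h1.trans_eq h2
    calc (((Bf f).erase u).card : ℝ) ≤ (((4*L+1)^d : ℕ) : ℝ) := this
      _ = (4*(L:ℝ)+1)^d := by push_cast; ring
  have hperbox : ∀ f : Fin N → Bool,
      ∑ v ∈ (Bf f).erase u, g v ≤ (4*(L:ℝ)+1)^d * w (K f) := by
    intro f
    calc ∑ v ∈ (Bf f).erase u, g v ≤ ((Bf f).erase u).card • w (K f) :=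
          Finset.sum_le_card_nsmul _ _ _ (hterm f)
      _ = (((Bf f).erase u).card : ℝ) * w (K f) := by rw [nsmul_eq_mul]
      _ ≤ (4*(L:ℝ)+1)^d * w (K f) := mul_le_mul_of_nonneg_right (hcard f) (hw0 _)
  -- fiber counting
  have hfiber : ∀ k : ℕ, ((Finset.univ.filter (fun f : Fin N → Bool => K f = k)).card : ℝ)
      ≤ (2:ℝ)^(N - k) := by
    intro k
    by_cases hk : k ≤ N
    · have hinj : (Finset.univ.filter (fun f : Fin N → Bool => K f = k)).card
          ≤ (Finset.univ : Finset (Fin (N - k) → Bool)).card := by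
        apply Finset.card_le_card_of_injOn
          (fun f (i : Fin (N - k)) => f ⟨k + i.1, by omega⟩)
        · intro f _; exact Finset.mem_univ _
        · intro f hf f' hf' hff
          simp only [Finset.coe_filter, Set.mem_setOf_eq, Finset.mem_univ, true_and] at hf hf'
          funext i
          rcases lt_or_ge i.1 k with hik | hik
          · -- both agree with m₀ on low coordinates
            have hfi : f i = m₀[(i.1 : ℕ)]'(by omega) := by
              have := splitIdx_take (l := List.ofFn f) (l' := m₀) i.1
                (by have h5 : splitIdx (List.ofFn f) m₀ = k := hf; omega) (by simpa using (by omega : i.1 < N)) (by omega)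
              simpa using this
            have hfi' : f' i = m₀[(i.1 : ℕ)]'(by omega) := by
              have := splitIdx_take (l := List.ofFn f') (l' := m₀) i.1
                (by have h5 : splitIdx (List.ofFn f') m₀ = k := hf'; omega) (by simpa using (by omega : i.1 < N)) (by omega)
              simpa using this
            rw [hfi, hfi']
          · have := congrFun hff ⟨i.1 - k, by omega⟩
            simp only at this
            have hi : (⟨k + (i.1 - k), by omega⟩ : Fin N) = i := by
              apply Fin.ext; simp; omega
            rwa [hi] at this
      have hcardu : (Finset.univ : Finset (Fin (N - k) → Bool)).card = 2^(N - k) := by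
        simp [Finset.card_univ]
      have : (Finset.univ.filter (fun f : Fin N → Bool => K f = k)).card ≤ 2^(N-k) := by
        rw [← hcardu]; exact hinj
      calc ((Finset.univ.filter (fun f : Fin N → Bool => K f = k)).card : ℝ)
          ≤ ((2^(N-k) : ℕ) : ℝ) := by exact_mod_cast this
        _ = (2:ℝ)^(N-k) := by push_cast; ring
    · have : (Finset.univ.filter (fun f : Fin N → Bool => K f = k)) = ∅ := by
        apply Finset.filter_false_of_mem
        intro f _
        have := hKle f
        omega
      rw [this]
      simp
  -- the weighted count bound
  have hwsum : ∑ f : Fin N → Bool, w (K f) ≤ 54 := by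
    rw [Finset.sum_comp w K]
    have hsub2 : (Finset.univ.image K) ⊆ Finset.range (N+1) := by
      intro k hk
      obtain ⟨f, _, rfl⟩ := Finset.mem_image.1 hk
      exact Finset.mem_range.2 (by have := hKle f; omega)
    calc ∑ k ∈ Finset.univ.image K,
            (Finset.univ.filter (fun f : Fin N → Bool => K f = k)).card • w k
        ≤ ∑ k ∈ Finset.univ.image K, (2:ℝ)^(N-k) * w k := by
          apply Finset.sum_le_sum
          intro k _
          rw [nsmul_eq_mul]
          exact mul_le_mul_of_nonneg_right (hfiber k) (hw0 k)
      _ ≤ ∑ k ∈ Finset.range (N+1), (2:ℝ)^(N-k) * w k := by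
          apply Finset.sum_le_sum_of_subset_of_nonneg hsub2
          intro k _ _
          positivity
      _ ≤ ∑ k ∈ Finset.range (N+1), 36 * (1/3:ℝ)^(N-k) := by
          apply Finset.sum_le_sum
          intro k hk
          have hkN : k ≤ N := by have := Finset.mem_range.1 hk; omega
          rw [hw]; dsimp only
          split
          · rename_i h2
            set i := N - k - 2 with hi
            have hj : N - k = i + 2 := by omega
            rw [hj]
            have hzle : ((6:ℝ)^i)^((2:ℤ) - (d:ℤ)) ≤ ((6:ℝ)^i)^(-1 : ℤ) := by
              apply zpow_le_zpow_right₀ (one_le_pow₀ (by norm_num))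
              omega
            calc (2:ℝ)^(i+2) * ((6:ℝ)^i)^((2:ℤ) - (d:ℤ))
                ≤ (2:ℝ)^(i+2) * ((6:ℝ)^i)^(-1 : ℤ) :=
                  mul_le_mul_of_nonneg_left hzle (by positivity)
              _ = 36 * (1/3:ℝ)^(i+2) := by
                  rw [zpow_neg, zpow_one]
                  have h6 : (6:ℝ)^i = 2^i * 3^i := by rw [← mul_pow]; norm_num
                  rw [h6]
                  have h2p : (0:ℝ) < 2^i := by positivity
                  have h3p : (0:ℝ) < 3^i := by positivity
                  field_simp
                  have h13 : (1/3:ℝ)^i * 3^i = 1 := by rw [← mul_pow]; norm_num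
                  linear_combination (-(2^i*4:ℝ)) * h13
          · -- w = 1, N - k ≤ 1
            rename_i h2
            have : N - k ≤ 1 := by omega
            interval_cases h : (N - k) <;> norm_num
      _ = 36 * ∑ k ∈ Finset.range (N+1), (1/3:ℝ)^(N-k) := by rw [Finset.mul_sum]
      _ = 36 * ∑ j ∈ Finset.range (N+1), (1/3:ℝ)^j := by
          congr 1
          rw [← Finset.sum_range_reflect]
          apply Finset.sum_congr rfl
          intro k hk
          congr 1
          have := Finset.mem_range.1 hk
          omega
      _ ≤ 36 * (3/2) := by
          have := gsum_le (N+1)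
          linarith
      _ = 54 := by norm_num
  -- assemble
  have h1 : (∑ᶠ v ∈ {v : Fin d → ℤ | v ∈ leafBoxes d L N T ∧ v ≠ u}, g v)
      = ∑ v ∈ hS.toFinset, g v := by
    rw [← finsum_mem_coe_finset, Set.Finite.coe_toFinset]
  rw [show (∑ᶠ v ∈ {v : Fin d → ℤ | v ∈ leafBoxes d L N T ∧ v ≠ u},
      (normInf (u - v) : ℝ) ^ ((2 : ℤ) - (d : ℤ)))
      = ∑ᶠ v ∈ {v : Fin d → ℤ | v ∈ leafBoxes d L N T ∧ v ≠ u}, g v from rfl, h1]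
  calc ∑ v ∈ hS.toFinset, g v
      ≤ ∑ v ∈ F, g v := by
        apply Finset.sum_le_sum_of_subset_of_nonneg
        · intro v hv
          exact hsub (hS.mem_toFinset.1 hv)
        · intro v _ _; exact hg0 v
    _ ≤ ∑ f : Fin N → Bool, ∑ v ∈ (Bf f).erase u, g v := sum_biUnion_le' _ _ _ hg0
    _ ≤ ∑ f : Fin N → Bool, (4*(L:ℝ)+1)^d * w (K f) := Finset.sum_le_sum fun f _ => hperbox f
    _ = (4*(L:ℝ)+1)^d * ∑ f : Fin N → Bool, w (K f) := by rw [← Finset.mul_sum]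
    _ ≤ (4*(L:ℝ)+1)^d * 54 :=
        mul_le_mul_of_nonneg_left hwsum (by positivity)
    _ = 54 * (4*(L:ℝ)+1)^d := by ring
end
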